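/- arXiv:1610.06329 — 6 statements merged into one kernel-verified Lean document; each statement's English description precedes it below -/
import Mathlib

section
/- (Prony uniqueness, case d = 1.) Let n ≥ 1. Let λ_1, …, λ_n ∈ ℂ be pairwise distinct and μ_1, …, μ_n ∈ ℂ be pairwise distinct, and let α_1, …, α_n ∈ ℂ and β_1, …, β_n ∈ ℂ all be nonzero. If Σ_{j=1}^n α_j λ_j^s = Σ_{j=1}^n β_j μ_j^s for every integer s with 0 ≤ s ≤ 2n−1, then there exists a permutation σ of {1, …, n} such that μ_j = λ_{σ(j)} and β_j = α_{σ(j)} for all j. Hence an n-term univariate exponential sum with pairwise distinct nodes and nonzero coefficients is uniquely determined by its 2n equidistant samples. -/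
open Finset Polynomial


/-- If a "moment" functional of `c` on distinct nodes `T` vanishes for the first
`T.card` powers, then `c` vanishes on `T`. -/
lemma prony_vanish (T : Finset ℂ) (c : ℂ → ℂ)
    (h : ∀ s < T.card, ∑ z ∈ T, c z * z ^ s = 0) :
    ∀ z ∈ T, c z = 0 := by
  intro z₀ hz₀
  set p := Lagrange.basis T id z₀ with hp
  have hinj : Set.InjOn (id : ℂ → ℂ) T := Function.injective_id.injOn
  have hdeg : p.natDegree < T.card := by
    rw [hp, Lagrange.natDegree_basis hinj hz₀]
    exact Nat.sub_lt (card_pos.mpr ⟨z₀, hz₀⟩) one_pos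
  have key : ∑ z ∈ T, c z * p.eval z = 0 := by
    have : ∀ z ∈ T, c z * p.eval z =
        ∑ s ∈ range T.card, p.coeff s * (c z * z ^ s) := by
      intro z hz
      rw [eval_eq_sum_range' hdeg, Finset.mul_sum]
      exact Finset.sum_congr rfl fun s _ => by ring
    rw [Finset.sum_congr rfl this, Finset.sum_comm]
    refine Finset.sum_eq_zero fun s hs => ?_
    rw [← Finset.mul_sum, h s (mem_range.mp hs), mul_zero]
  have : ∑ z ∈ T, c z * p.eval z = c z₀ := by
    rw [Finset.sum_eq_single z₀]
    · have h1 : p.eval z₀ = 1 := by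
        simpa using Lagrange.eval_basis_self hinj hz₀ (v := id)
      rw [h1, mul_one]
    · intro z hz hne
      have : p.eval z = 0 := by simpa using Lagrange.eval_basis_of_ne (v := id) (Ne.symm hne) hz
      rw [this, mul_zero]
    · exact fun h => absurd hz₀ h
  rw [this] at key
  exact key


/-- Prony uniqueness in the univariate case: an `n`-term exponential sum
`F_s = ∑ j, α j * λ j ^ s` with pairwise distinct nodes and nonzero
coefficients is determined, up to a permutation of the terms, by its
`2n` equidistant samples `F_0, …, F_{2n-1}`. -/
theorem prony_uniqueness_univariate
    (n : ℕ) (hn : 1 ≤ n)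
    (lam mu α β : Fin n → ℂ)
    (hlam : Function.Injective lam) (hmu : Function.Injective mu)
    (hα : ∀ j, α j ≠ 0) (hβ : ∀ j, β j ≠ 0)
    (hsamp : ∀ s : ℕ, s ≤ 2 * n - 1 →
      ∑ j, α j * lam j ^ s = ∑ j, β j * mu j ^ s) :
    ∃ σ : Equiv.Perm (Fin n), ∀ j, mu j = lam (σ j) ∧ β j = α (σ j) := by
  classical
  set T : Finset ℂ := (Finset.univ.image lam) ∪ (Finset.univ.image mu) with hT
  set c : ℂ → ℂ := fun z =>
    (∑ j ∈ Finset.univ.filter (fun j => lam j = z), α j) -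
    (∑ j ∈ Finset.univ.filter (fun j => mu j = z), β j) with hc
  have hlamT : ∀ j, lam j ∈ T := fun j =>
    Finset.mem_union_left _ (Finset.mem_image_of_mem lam (Finset.mem_univ j))
  have hmuT : ∀ j, mu j ∈ T := fun j =>
    Finset.mem_union_right _ (Finset.mem_image_of_mem mu (Finset.mem_univ j))
  have hA : ∀ (f : Fin n → ℂ) (v : Fin n → ℂ), (∀ j, v j ∈ T) → ∀ s : ℕ,
      ∑ z ∈ T, (∑ j ∈ Finset.univ.filter (fun j => v j = z), f j) * z ^ s
        = ∑ j, f j * v j ^ s := by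
    intro f v hv s
    rw [← Finset.sum_fiberwise_of_maps_to (g := v) (fun j _ => hv j)
      (fun j => f j * v j ^ s)]
    refine Finset.sum_congr rfl fun z _ => ?_
    rw [Finset.sum_mul]
    refine Finset.sum_congr rfl fun j hj => ?_
    rw [(Finset.mem_filter.mp hj).2]
  have hcard : T.card ≤ 2 * n := by
    calc T.card ≤ (Finset.univ.image lam).card + (Finset.univ.image mu).card :=
          Finset.card_union_le _ _
      _ ≤ n + n := by
          gcongr <;> exact (Finset.card_image_le.trans (by simp))
      _ = 2 * n := by ring
  have hvanish : ∀ z ∈ T, c z = 0 := by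
    refine prony_vanish T c fun s hs => ?_
    have hs' : s ≤ 2 * n - 1 := by omega
    have : ∑ z ∈ T, c z * z ^ s
        = (∑ j, α j * lam j ^ s) - (∑ j, β j * mu j ^ s) := by
      rw [← hA α lam hlamT s, ← hA β mu hmuT s, ← Finset.sum_sub_distrib]
      exact Finset.sum_congr rfl fun z _ => by rw [hc]; ring
    rw [this, hsamp s hs', sub_self]
  have hfib : ∀ (v : Fin n → ℂ), Function.Injective v → ∀ j,
      Finset.univ.filter (fun k => v k = v j) = {j} := by
    intro v hv j
    ext k
    simp only [Finset.mem_filter, Finset.mem_univ, true_and, Finset.mem_singleton]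
    exact ⟨fun h => hv h, fun h => by rw [h]⟩
  have hg : ∀ j, ∃ k, lam k = mu j ∧ α k = β j := by
    intro j
    have h0 := hvanish (mu j) (hmuT j)
    rw [hc] at h0
    simp only [hfib mu hmu j, Finset.sum_singleton] at h0
    have hsum : ∑ k ∈ Finset.univ.filter (fun k => lam k = mu j), α k = β j := by
      linear_combination h0
    have hne : (Finset.univ.filter (fun k => lam k = mu j)).Nonempty := by
      by_contra h
      rw [Finset.not_nonempty_iff_eq_empty] at h
      rw [h, Finset.sum_empty] at hsum
      exact hβ j hsum.symm
    obtain ⟨k, hk⟩ := hne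
    have hk' : lam k = mu j := (Finset.mem_filter.mp hk).2
    refine ⟨k, hk', ?_⟩
    have : Finset.univ.filter (fun m => lam m = mu j) = {k} := by
      rw [← hk']; exact hfib lam hlam k
    rw [this, Finset.sum_singleton] at hsum
    exact hsum
  choose g hg1 hg2 using hg
  have hginj : Function.Injective g := by
    intro i j hij
    apply hmu
    rw [← hg1 i, ← hg1 j, hij]
  obtain ⟨σ, hσ⟩ : ∃ σ : Equiv.Perm (Fin n), ∀ j, σ j = g j :=
    ⟨Equiv.ofBijective g ((Finite.injective_iff_bijective).mp hginj), fun _ => rfl⟩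
  exact ⟨σ, fun j => by rw [hσ j]; exact ⟨(hg1 j).symm, (hg2 j).symm⟩⟩
end

section
/- (Main theorem: recovery from (d+1)n samples.) Let d, n ≥ 1 and let Δ = δ_0, δ_1, …, δ_{d−1} be d linearly independent vectors in ℂ^d. Let (α_j, φ_j)_{j=1..n} and (α'_j, φ'_j)_{j=1..n} with all α_j, α'_j ∈ ℂ nonzero and φ_j, φ'_j ∈ ℂ^d, and suppose: the n values exp(⟨φ_j, Δ⟩) are pairwise distinct, as are the n values exp(⟨φ'_j, Δ⟩); |Im ⟨φ_j, Δ⟩| < π, |Im ⟨φ'_j, Δ⟩| < π for all j; and |Im ⟨φ_j, δ_i⟩| < π, |Im ⟨φ'_j, δ_i⟩| < π for all j and all i = 1, …, d−1. If Σ_{j=1}^n α_j exp(⟨φ_j, sΔ⟩) = Σ_{j=1}^n α'_j exp(⟨φ'_j, sΔ⟩) for all integers 0 ≤ s ≤ 2n−1, and Σ_{j=1}^n α_j exp(⟨φ_j, (ℓ−1)Δ + δ_i⟩) = Σ_{j=1}^n α'_j exp(⟨φ'_j, (ℓ−1)Δ + δ_i⟩) for all 1 ≤ ℓ ≤ n and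 1 ≤ i ≤ d−1, then there exists a permutation σ of {1, …, n} with φ'_j = φ_{σ(j)} and α'_j = α_{σ(j)} for all j. Hence, under these conditions, the (d+1)n samples f(sΔ), 0 ≤ s ≤ 2n−1, and f((ℓ−1)Δ + δ_i), 1 ≤ ℓ ≤ n, 1 ≤ i ≤ d−1, determine all parameters of the exponential sum. -/
open Complex

open Complex Finset

/-- Injectivity of `exp` on the open horizontal strip `|Im| < π`. -/
lemma exp_inj_strip {a b : ℂ} (ha : |a.im| < Real.pi) (hb : |b.im| < Real.pi)
    (h : Complex.exp a = Complex.exp b) : a = b := by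
  rw [Complex.exp_eq_exp_iff_exists_int] at h
  obtain ⟨k, hk⟩ := h
  have him : a.im = b.im + (k : ℝ) * (2 * Real.pi) := by
    rw [hk]; simp [Complex.add_im, Complex.mul_im]
  have hk0 : k = 0 := by
    by_contra hne
    have h1 : (1 : ℝ) ≤ |(k : ℝ)| := by
      rw [← Int.cast_abs]
      exact_mod_cast Int.one_le_abs hne
    have : |(k : ℝ) * (2 * Real.pi)| < 2 * Real.pi := by
      have : |(k : ℝ) * (2 * Real.pi)| = |a.im - b.im| := by rw [him]; simp
      rw [this]
      calc |a.im - b.im| ≤ |a.im| + |b.im| := abs_sub _ _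
        _ < 2 * Real.pi := by linarith
    rw [abs_mul, abs_of_pos (by positivity : (0:ℝ) < 2 * Real.pi)] at this
    nlinarith [Real.pi_pos]
  rw [hk0] at hk; simpa using hk

/-- Prony uniqueness: two `n`-term power sums with nonzero coefficients and
pairwise distinct nodes agreeing on the first `2n` power sums coincide up to
a permutation. -/
lemma prony {n : ℕ} (x x' α α' : Fin n → ℂ)
    (hx : Function.Injective x) (hx' : Function.Injective x')
    (hα : ∀ j, α j ≠ 0) (hα' : ∀ j, α' j ≠ 0)
    (h : ∀ s : ℕ, s < 2 * n → ∑ j, α j * x j ^ s = ∑ j, α' j * x' j ^ s) :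
    ∃ σ : Equiv.Perm (Fin n), ∀ j, x' j = x (σ j) ∧ α' j = α (σ j) := by
  classical
  set W : Finset ℂ := Finset.image x Finset.univ ∪ Finset.image x' Finset.univ with hW
  set c : ℂ → ℂ := fun w =>
    (∑ j ∈ Finset.univ.filter (fun j => x j = w), α j) -
    (∑ j ∈ Finset.univ.filter (fun j => x' j = w), α' j) with hc
  have hfib : ∀ (y : Fin n → ℂ) (β : Fin n → ℂ) (s : ℕ),
      (∀ j, y j ∈ W) →
      ∑ w ∈ W, (∑ j ∈ Finset.univ.filter (fun j => y j = w), β j) * w ^ s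
        = ∑ j, β j * y j ^ s := by
    intro y β s hy
    rw [← Finset.sum_fiberwise_of_maps_to (fun j _ => hy j)
      (fun j => β j * y j ^ s)]
    refine Finset.sum_congr rfl fun w _ => ?_
    rw [Finset.sum_mul]
    refine Finset.sum_congr rfl fun j hj => ?_
    rw [(Finset.mem_filter.mp hj).2]
  have hxW : ∀ j, x j ∈ W := fun j =>
    Finset.mem_union_left _ (Finset.mem_image_of_mem x (Finset.mem_univ j))
  have hx'W : ∀ j, x' j ∈ W :=
    fun j => Finset.mem_union_right _ (Finset.mem_image_of_mem x' (Finset.mem_univ j))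
  have hsum : ∀ s : ℕ, s < 2 * n → ∑ w ∈ W, c w * w ^ s = 0 := by
    intro s hs
    have : ∑ w ∈ W, c w * w ^ s
        = (∑ j, α j * x j ^ s) - ∑ j, α' j * x' j ^ s := by
      simp only [hc, sub_mul, Finset.sum_sub_distrib]
      rw [hfib x α s hxW, hfib x' α' s hx'W]
    rw [this, h s hs, sub_self]
  -- enumerate W and apply Vandermonde
  have hcard : W.card ≤ 2 * n := by
    calc W.card ≤ (Finset.image x Finset.univ).card + (Finset.image x' Finset.univ).card :=
          Finset.card_union_le _ _
      _ ≤ n + n :=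
          Nat.add_le_add (Finset.card_image_le.trans (by simp))
            (Finset.card_image_le.trans (by simp))
      _ = 2 * n := by ring
  have hzeroW : ∀ w ∈ W, c w = 0 := by
    set m := W.card with hm
    set g : Fin m → ℂ := fun i => ((W.equivFin.symm i : W) : ℂ) with hg
    have hginj : Function.Injective g :=
      fun i j hij => W.equivFin.symm.injective (Subtype.ext hij)
    have hsum' : ∀ s : Fin m, ∑ i, c (g i) * g i ^ (s : ℕ) = 0 := by
      intro s
      have h1 := hsum s (lt_of_lt_of_le s.isLt hcard)
      rw [← Finset.sum_coe_sort W (fun w => c w * w ^ (s : ℕ))] at h1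
      rw [← Equiv.sum_comp W.equivFin.symm
        (fun a : W => c (a : ℂ) * (a : ℂ) ^ (s : ℕ))] at h1
      exact h1
    have := Matrix.eq_zero_of_forall_pow_sum_mul_pow_eq_zero hginj hsum'
    intro w hw
    have : c (g (W.equivFin ⟨w, hw⟩)) = 0 := congrFun this _
    simpa [hg] using this
  -- extract the permutation
  have hKey : ∀ j, ∃ t, x t = x' j ∧ α t = α' j := by
    intro j
    have h0 : c (x' j) = 0 := hzeroW _ (hx'W j)
    have hfilt' : Finset.univ.filter (fun i => x' i = x' j) = {j} := by
      ext i; simp [hx'.eq_iff]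
    have hsum2 : ∑ i ∈ Finset.univ.filter (fun i => x i = x' j), α i = α' j := by
      have := h0
      rw [hc] at this
      simp only [hfilt', Finset.sum_singleton, sub_eq_zero] at this
      exact this
    have hne : (Finset.univ.filter (fun i => x i = x' j)).Nonempty := by
      by_contra hcon
      rw [Finset.not_nonempty_iff_eq_empty] at hcon
      rw [hcon, Finset.sum_empty] at hsum2
      exact hα' j hsum2.symm
    obtain ⟨t, ht⟩ := hne
    have hxt : x t = x' j := (Finset.mem_filter.mp ht).2
    refine ⟨t, hxt, ?_⟩
    have hfilt : Finset.univ.filter (fun i => x i = x' j) = {t} := by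
      ext i
      simp only [Finset.mem_filter, Finset.mem_univ, true_and, Finset.mem_singleton]
      constructor
      · intro hi; exact hx (hi.trans hxt.symm)
      · intro hi; rw [hi]; exact hxt
    rw [hfilt, Finset.sum_singleton] at hsum2
    exact hsum2
  choose τ hτ1 hτ2 using hKey
  have hτinj : Function.Injective τ := by
    intro i j hij
    apply hx'
    rw [← hτ1 i, ← hτ1 j, hij]
  let σ := Equiv.ofBijective τ (Finite.injective_iff_bijective.mp hτinj)
  exact ⟨σ, fun j => ⟨(hτ1 j).symm, (hτ2 j).symm⟩⟩

/-- Main theorem: recovery of a `d`-variate `n`-term exponential sum from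
`(d+1)n` samples.  Here `δ 0 = Δ` and `δ 1, …, δ (d-1)` are the
identification shifts; the `δ i` are linearly independent.
`⟨φ, x⟩ = ∑ k, φ k * x k` is the bilinear inner product.
The samples are `f(sΔ)` for `0 ≤ s ≤ 2n-1` and `f((ℓ-1)Δ + δ i)` for
`1 ≤ ℓ ≤ n` (encoded by `ℓ : Fin n` standing for `ℓ-1`) and `1 ≤ i ≤ d-1`
(encoded by `i : Fin d`, `i ≠ 0`).  If two parameter sets with nonzero
coefficients, pairwise distinct values `exp ⟨φ j, Δ⟩`, and imaginary parts
of all inner products `⟨φ j, δ i⟩` smaller than `π` in modulus produce the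
same samples, then they coincide up to a permutation of the terms. -/
theorem recovery_from_min_samples
    (d n : ℕ) (hd : 1 ≤ d) (hn : 1 ≤ n)
    (δ : Fin d → Fin d → ℂ) (hδ : LinearIndependent ℂ δ)
    (α α' : Fin n → ℂ) (φ φ' : Fin n → Fin d → ℂ)
    (hα : ∀ j, α j ≠ 0) (hα' : ∀ j, α' j ≠ 0)
    (hdist : Function.Injective fun j => Complex.exp (∑ k, φ j k * δ ⟨0, hd⟩ k))
    (hdist' : Function.Injective fun j => Complex.exp (∑ k, φ' j k * δ ⟨0, hd⟩ k))
    (hIm : ∀ j i, |(∑ k, φ j k * δ i k).im| < Real.pi)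
    (hIm' : ∀ j i, |(∑ k, φ' j k * δ i k).im| < Real.pi)
    (hsamp1 : ∀ s : ℕ, s ≤ 2 * n - 1 →
      ∑ j, α j * Complex.exp (∑ k, φ j k * ((s : ℂ) * δ ⟨0, hd⟩ k)) =
      ∑ j, α' j * Complex.exp (∑ k, φ' j k * ((s : ℂ) * δ ⟨0, hd⟩ k)))
    (hsamp2 : ∀ (ℓ : Fin n) (i : Fin d), i ≠ ⟨0, hd⟩ →
      ∑ j, α j * Complex.exp (∑ k, φ j k * (((ℓ : ℕ) : ℂ) * δ ⟨0, hd⟩ k + δ i k)) =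
      ∑ j, α' j * Complex.exp (∑ k, φ' j k * (((ℓ : ℕ) : ℂ) * δ ⟨0, hd⟩ k + δ i k))) :
    ∃ σ : Equiv.Perm (Fin n), ∀ j, φ' j = φ (σ j) ∧ α' j = α (σ j) := by
  classical
  set Δ : Fin d → ℂ := δ ⟨0, hd⟩ with hΔ
  have hpow : ∀ (ψ : Fin n → Fin d → ℂ) (j : Fin n) (s : ℕ),
      Complex.exp (∑ k, ψ j k * ((s : ℂ) * Δ k))
        = Complex.exp (∑ k, ψ j k * Δ k) ^ s := by
    intro ψ j s
    rw [← Complex.exp_nat_mul]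
    congr 1
    rw [Finset.mul_sum]
    exact Finset.sum_congr rfl fun k _ => by ring
  have hsplit : ∀ (ψ : Fin n → Fin d → ℂ) (j : Fin n) (s : ℕ) (i : Fin d),
      Complex.exp (∑ k, ψ j k * ((s : ℂ) * Δ k + δ i k))
        = Complex.exp (∑ k, ψ j k * Δ k) ^ s
            * Complex.exp (∑ k, ψ j k * δ i k) := by
    intro ψ j s i
    rw [← Complex.exp_nat_mul, ← Complex.exp_add]
    congr 1
    rw [Finset.mul_sum, ← Finset.sum_add_distrib]
    exact Finset.sum_congr rfl fun k _ => by ring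
  have h1 : ∀ s : ℕ, s < 2 * n →
      ∑ j, α j * Complex.exp (∑ k, φ j k * Δ k) ^ s
        = ∑ j, α' j * Complex.exp (∑ k, φ' j k * Δ k) ^ s := by
    intro s hs
    have := hsamp1 s (by omega)
    simpa only [hpow] using this
  obtain ⟨σ, hσ⟩ := prony _ _ α α' hdist hdist' hα hα' h1
  have hinner0 : ∀ j, ∑ k, φ' j k * Δ k = ∑ k, φ (σ j) k * Δ k := by
    intro j
    exact exp_inj_strip (hIm' j ⟨0, hd⟩) (hIm (σ j) ⟨0, hd⟩) (hσ j).1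
  have hinner : ∀ (i : Fin d) (j : Fin n),
      ∑ k, φ' j k * δ i k = ∑ k, φ (σ j) k * δ i k := by
    intro i j0
    by_cases hi : i = ⟨0, hd⟩
    · rw [hi]; exact hinner0 j0
    · set c : Fin n → ℂ := fun j =>
        α j * Complex.exp (∑ k, φ j k * δ i k) -
          α' (σ.symm j) * Complex.exp (∑ k, φ' (σ.symm j) k * δ i k) with hcdef
      have hcz : ∀ s : Fin n,
          ∑ j, c j * Complex.exp (∑ k, φ j k * Δ k) ^ (s : ℕ) = 0 := by
        intro s
        have h2 := hsamp2 s i hi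
        simp only [hsplit] at h2
        have hL : ∑ j, α j * (Complex.exp (∑ k, φ j k * Δ k) ^ (s : ℕ)
              * Complex.exp (∑ k, φ j k * δ i k))
            = ∑ j, (α j * Complex.exp (∑ k, φ j k * δ i k))
              * Complex.exp (∑ k, φ j k * Δ k) ^ (s : ℕ) :=
          Finset.sum_congr rfl fun j _ => by ring
        have hR : ∑ j, α' j * (Complex.exp (∑ k, φ' j k * Δ k) ^ (s : ℕ)
              * Complex.exp (∑ k, φ' j k * δ i k))
            = ∑ j, (α' (σ.symm j) * Complex.exp (∑ k, φ' (σ.symm j) k * δ i k))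
              * Complex.exp (∑ k, φ j k * Δ k) ^ (s : ℕ) := by
          rw [← Equiv.sum_comp σ (fun j =>
            (α' (σ.symm j) * Complex.exp (∑ k, φ' (σ.symm j) k * δ i k))
              * Complex.exp (∑ k, φ j k * Δ k) ^ (s : ℕ))]
          simp only [Equiv.symm_apply_apply]
          refine Finset.sum_congr rfl fun j _ => ?_
          rw [(hσ j).1]
          ring
        simp only [hcdef, sub_mul, Finset.sum_sub_distrib]
        rw [← hL, ← hR, h2, sub_self]
      have hc0 := Matrix.eq_zero_of_forall_pow_sum_mul_pow_eq_zero
        (f := fun j => Complex.exp (∑ k, φ j k * Δ k)) (v := c) hdist hcz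
      have hcj := congrFun hc0 (σ j0)
      simp only [hcdef, Equiv.symm_apply_apply, Pi.zero_apply, sub_eq_zero] at hcj
      rw [(hσ j0).2] at hcj
      have hexp := mul_left_cancel₀ (hα (σ j0)) hcj
      exact exp_inj_strip (hIm' j0 i) (hIm (σ j0) i) hexp.symm
  refine ⟨σ, fun j => ⟨?_, (hσ j).2⟩⟩
  have hall : ∀ i, ∑ k, (φ' j k - φ (σ j) k) * δ i k = 0 := by
    intro i
    simp only [sub_mul, Finset.sum_sub_distrib, hinner i j, sub_self]
  set ψ : Fin d → ℂ := fun k => φ' j k - φ (σ j) k with hψ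
  let L : (Fin d → ℂ) →ₗ[ℂ] ℂ :=
    { toFun := fun v => ∑ k, ψ k * v k
      map_add' := fun u v => by simp [mul_add, Finset.sum_add_distrib]
      map_smul' := fun a v => by
        simp only [smul_eq_mul, RingHom.id_apply, Finset.mul_sum, Pi.smul_apply]
        exact Finset.sum_congr rfl fun k _ => by ring }
  haveI : Nonempty (Fin d) := ⟨⟨0, hd⟩⟩
  have hcardeq : Fintype.card (Fin d) = Module.finrank ℂ (Fin d → ℂ) := by
    simp [Module.finrank_fintype_fun_eq_card]
  let b := basisOfLinearIndependentOfCardEqFinrank hδ hcardeq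
  have hbcoe : ⇑b = δ := coe_basisOfLinearIndependentOfCardEqFinrank hδ hcardeq
  have hL0 : L = 0 := by
    refine b.ext fun i => ?_
    have hbi : b i = δ i := congrFun hbcoe i
    rw [hbi]
    show (∑ k, ψ k * δ i k) = 0
    exact hall i
  funext k
  have hLk := LinearMap.congr_fun hL0 (Pi.single k 1 : Fin d → ℂ)
  have heval : ∑ k', ψ k' * (Pi.single k 1 : Fin d → ℂ) k' = ψ k := by
    rw [Finset.sum_eq_single k]
    · simp
    · intro b' _ hb'; simp [Pi.single_eq_of_ne hb']
    · intro hk; exact absurd (Finset.mem_univ k) hk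
  have hψk : ψ k = 0 := by
    rw [← heval]
    exact hLk
  have : φ' j k - φ (σ j) k = 0 := hψk
  exact sub_eq_zero.mp this
end

section
/- For every λ ∈ ℂ one has det(H1 − λ H0) = (det V)² · ∏_{j=1}^n α_j (λ_j − λ). Consequently, if λ_1, …, λ_n are pairwise distinct and α_1, …, α_n are all nonzero, then λ ∈ ℂ satisfies det(H1 − λ H0) = 0 if and only if λ ∈ {λ_1, …, λ_n}; i.e., the generalized eigenvalues of the pencil (H1, H0) are exactly the nodes λ_1, …, λ_n. -/
open Matrix

/-- For the Hankel matrices `H0 = (F_{s+t})` and `H1 = (F_{s+t+1})` of the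
samples `F_s = ∑ j, α j * λ j ^ s` one has, for every `λ ∈ ℂ`,
`det (H1 - λ H0) = (det V)² * ∏ j, α j (λ j - λ)` with `V` the Vandermonde
matrix.  Consequently, if the `λ j` are pairwise distinct and the `α j` all
nonzero, then `det (H1 - λ H0) = 0` iff `λ ∈ {λ_1, …, λ_n}`: the generalized
eigenvalues of the pencil `(H1, H0)` are exactly the nodes. -/
theorem hankel_pencil_eigenvalues
    (n : ℕ) (hn : 1 ≤ n) (lam α : Fin n → ℂ) (F : ℕ → ℂ)
    (hF : ∀ s : ℕ, F s = ∑ j, α j * lam j ^ s) :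
    (∀ z : ℂ,
      ((Matrix.of fun s t : Fin n => F ((s : ℕ) + (t : ℕ) + 1)) -
        z • (Matrix.of fun s t : Fin n => F ((s : ℕ) + (t : ℕ)))).det =
      ((Matrix.of fun (s : Fin n) (j : Fin n) => lam j ^ (s : ℕ)).det) ^ 2 *
        ∏ j, α j * (lam j - z)) ∧
    (Function.Injective lam → (∀ j, α j ≠ 0) →
      ∀ z : ℂ,
        ((Matrix.of fun s t : Fin n => F ((s : ℕ) + (t : ℕ) + 1)) -
          z • (Matrix.of fun s t : Fin n => F ((s : ℕ) + (t : ℕ)))).det = 0 ↔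
        ∃ j, z = lam j) := by
  set V : Matrix (Fin n) (Fin n) ℂ := Matrix.of fun (s : Fin n) (j : Fin n) => lam j ^ (s : ℕ)
  have main : ∀ z : ℂ,
      ((Matrix.of fun s t : Fin n => F ((s : ℕ) + (t : ℕ) + 1)) -
        z • (Matrix.of fun s t : Fin n => F ((s : ℕ) + (t : ℕ)))).det =
      V.det ^ 2 * ∏ j, α j * (lam j - z) := by
    intro z
    have key : (Matrix.of fun s t : Fin n => F ((s : ℕ) + (t : ℕ) + 1)) -
        z • (Matrix.of fun s t : Fin n => F ((s : ℕ) + (t : ℕ))) =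
        V * (Matrix.diagonal (fun j => α j * (lam j - z)) * Vᵀ) := by
      ext s t
      simp only [Matrix.sub_apply, Matrix.smul_apply, Matrix.of_apply, hF,
        Matrix.mul_apply, Matrix.diagonal_mul, Matrix.transpose_apply,
        smul_eq_mul, Finset.mul_sum, ← Finset.sum_sub_distrib]
      refine Finset.sum_congr rfl fun j _ => ?_
      simp only [Matrix.diagonal_apply, mul_ite, mul_zero, ite_mul, zero_mul,
        Finset.sum_ite_eq, Finset.mem_univ, if_true, Matrix.of_apply, V,
        pow_add, pow_succ]
      ring
    rw [key, Matrix.det_mul, Matrix.det_mul, Matrix.det_transpose,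
      Matrix.det_diagonal, sq]
    ring
  refine ⟨main, fun hinj hα z => ?_⟩
  have hV : V.det ≠ 0 := by
    have : V = (Matrix.vandermonde lam)ᵀ := by
      ext s j; simp [V, Matrix.vandermonde]
    rw [this, Matrix.det_transpose]
    exact (Matrix.det_vandermonde_ne_zero_iff).2 hinj
  rw [main z]
  constructor
  · intro h
    rcases mul_eq_zero.1 h with h | h
    · exact absurd h (pow_ne_zero 2 hV)
    · rcases Finset.prod_eq_zero_iff.1 h with ⟨j, _, hj⟩
      rcases mul_eq_zero.1 hj with h' | h'
      · exact absurd h' (hα j)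
      · exact ⟨j, (sub_eq_zero.1 h').symm⟩
  · rintro ⟨j, rfl⟩
    rw [Finset.prod_eq_zero (Finset.mem_univ j) (by simp), mul_zero]
end

section
/- For each j = 1, …, n there exists a nonzero vector v ∈ ℂⁿ with H1 v = λ_j H0 v; i.e., each node λ_j is a generalized eigenvalue of the Hankel pencil (H1, H0). -/
open Matrix

/-- Each node `λ j` is a generalized eigenvalue of the Hankel pencil
`(H1, H0)` built from the samples `F_s = ∑ j, α j * λ j ^ s`: there is a
nonzero vector `v ∈ ℂⁿ` with `H1 v = λ j H0 v`. -/
theorem node_is_generalized_eigenvalue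
    (n : ℕ) (hn : 1 ≤ n) (lam α : Fin n → ℂ) (F : ℕ → ℂ)
    (hF : ∀ s : ℕ, F s = ∑ j, α j * lam j ^ s) :
    ∀ j : Fin n, ∃ v : Fin n → ℂ, v ≠ 0 ∧
      (Matrix.of fun s t : Fin n => F ((s : ℕ) + (t : ℕ) + 1)).mulVec v =
        lam j • (Matrix.of fun s t : Fin n => F ((s : ℕ) + (t : ℕ))).mulVec v := by
  intro j
  set H1 : Matrix (Fin n) (Fin n) ℂ :=
    Matrix.of fun s t : Fin n => F ((s : ℕ) + (t : ℕ) + 1) with hH1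
  set H0 : Matrix (Fin n) (Fin n) ℂ :=
    Matrix.of fun s t : Fin n => F ((s : ℕ) + (t : ℕ)) with hH0
  set V : Matrix (Fin n) (Fin n) ℂ := Matrix.of fun s k : Fin n => lam k ^ (s : ℕ) with hV
  set D : Matrix (Fin n) (Fin n) ℂ :=
    Matrix.diagonal fun k => α k * (lam k - lam j) with hD
  have hM : H1 - lam j • H0 = V * D * Vᵀ := by
    ext s t
    have : (V * D * Vᵀ) s t = ∑ k, lam k ^ (s : ℕ) * (α k * (lam k - lam j)) * lam k ^ (t : ℕ) := by
      simp [Matrix.mul_apply, hV, hD, Matrix.diagonal_apply, Finset.sum_mul,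
        mul_ite, ite_mul, mul_zero, zero_mul]
    rw [this]
    simp only [Matrix.sub_apply, Matrix.smul_apply, hH1, hH0, Matrix.of_apply, hF,
      smul_eq_mul, Finset.mul_sum]
    rw [← Finset.sum_sub_distrib]
    refine Finset.sum_congr rfl fun k _ => ?_
    rw [pow_add, pow_add, pow_succ]
    ring
  have hdet : (H1 - lam j • H0).det = 0 := by
    rw [hM, Matrix.det_mul, Matrix.det_mul, hD, Matrix.det_diagonal]
    have : (∏ k, α k * (lam k - lam j)) = 0 :=
      Finset.prod_eq_zero (Finset.mem_univ j) (by simp)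
    rw [this]; ring
  obtain ⟨v, hv, hMv⟩ := (Matrix.exists_mulVec_eq_zero_iff).mpr hdet
  refine ⟨v, hv, ?_⟩
  have h0 : H1.mulVec v - lam j • H0.mulVec v = 0 := by
    rw [← Matrix.smul_mulVec, ← Matrix.sub_mulVec]
    exact hMv
  exact sub_eq_zero.mp h0
end

section
/- (Solution of the disentanglement system.) Let d, n ≥ 1, let φ_1, …, φ_n ∈ ℂ^d and α_1, …, α_n ∈ ℂ, let f(x) = Σ_{j=1}^n α_j exp(⟨φ_j, x⟩), let Δ, δ ∈ ℂ^d, and set Φ_j = ⟨φ_j, Δ⟩. Suppose there are indices 0 = h_0 < h_1 < … < h_ν = n such that Φ_k = Φ_{h_j} for all k with h_{j−1} < k ≤ h_j, and that the ν values exp(Φ_{h_1}), …, exp(Φ_{h_ν}) are pairwise distinct. Fix an integer s ≥ 0 and define the samples F_{sℓ} = f((ℓ−1)Δ + sδ) for ℓ = 1, …, ν. Then the ν×ν Vandermonde system whose (ℓ, j) entry is exp((ℓ−1)Φ_{h_j}) and whose right-hand side is (F_{s1}, …, F_{sν})ᵀ has the unique solution A_{sj} = Σ_{k=h_{j−1}+1}^{h_j}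 α_k exp(⟨φ_k, sδ⟩), j = 1, …, ν. -/
lemma pile_sum {M : Type*} [AddCommMonoid M] :
    ∀ (ν : ℕ) (h : Fin (ν + 1) → ℕ), Monotone h → ∀ (G : ℕ → M),
      ∑ j : Fin ν, ∑ k ∈ Finset.Ico (h j.castSucc) (h j.succ), G k
        = ∑ k ∈ Finset.Ico (h 0) (h (Fin.last ν)), G k := by
  intro ν
  induction ν with
  | zero => intro h _ G; simp
  | succ ν ih =>
    intro h hm G
    rw [Fin.sum_univ_castSucc]
    have e : ∀ j : Fin ν, Fin.castSucc (j.succ) = Fin.succ (j.castSucc) := by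
      intro j; ext; simp
    have key := ih (h ∘ Fin.castSucc)
      (fun _ _ hab => hm (Fin.castSucc_le_castSucc_iff.mpr hab)) G
    simp only [Function.comp, e] at key
    rw [key]
    have e0 : (Fin.castSucc (0 : Fin (ν+1))) = (0 : Fin (ν+2)) := rfl
    rw [e0, show Fin.succ (Fin.last ν) = Fin.last (ν+1) from rfl]
    exact Finset.sum_Ico_consecutive G (hm (Fin.zero_le _)) (hm (Fin.le_last _))


/-- Solution of the disentanglement system.  Terms are indexed `0, …, n-1`
(0-indexed version of `1, …, n`) and `h : Fin (ν+1) → ℕ` encodes the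
collision indices `0 = h_0 < h_1 < … < h_ν = n`; pile `j` consists of the
terms `k` with `h_{j-1} ≤ k < h_j`, with representative `h_j - 1`.  Assume
`Φ k = ⟨φ k, Δ⟩` is constant on each pile and the `ν` values `exp Φ_{h_j}`
are pairwise distinct.  For fixed `s`, the samples
`F ℓ = f((ℓ-1)Δ + sδ)`, `ℓ = 1, …, ν` (encoded by `ℓ : Fin ν` standing for
`ℓ-1`), satisfy the `ν×ν` Vandermonde system with `(ℓ, j)` entry
`exp ((ℓ-1) Φ_{h_j})`, whose unique solution is
`A j = ∑_{k ∈ pile j} α k * exp ⟨φ k, sδ⟩`. -/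
theorem disentanglement_system
    (d n ν : ℕ) (hd : 1 ≤ d) (hn : 1 ≤ n) (hν : 1 ≤ ν)
    (φ : ℕ → Fin d → ℂ) (α : ℕ → ℂ) (Δ δ : Fin d → ℂ)
    (Φ : ℕ → ℂ) (hΦ : ∀ k, Φ k = ∑ i, φ k i * Δ i)
    (h : Fin (ν + 1) → ℕ) (hmono : StrictMono h)
    (h0 : h 0 = 0) (hlast : h (Fin.last ν) = n)
    (hcol : ∀ j : Fin ν, ∀ k : ℕ, h j.castSucc ≤ k → k < h j.succ →
      Φ k = Φ (h j.succ - 1))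
    (hdist : Function.Injective fun j : Fin ν => Complex.exp (Φ (h j.succ - 1)))
    (s : ℕ) (F : Fin ν → ℂ)
    (hF : ∀ ℓ : Fin ν, F ℓ = ∑ k ∈ Finset.range n, α k *
      Complex.exp (∑ i, φ k i * (((ℓ : ℕ) : ℂ) * Δ i + (s : ℂ) * δ i))) :
    (∀ ℓ : Fin ν, ∑ j : Fin ν,
        Complex.exp (((ℓ : ℕ) : ℂ) * Φ (h j.succ - 1)) *
          (∑ k ∈ Finset.Ico (h j.castSucc) (h j.succ),
            α k * Complex.exp (∑ i, φ k i * ((s : ℂ) * δ i))) = F ℓ) ∧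
    ∀ A : Fin ν → ℂ,
      (∀ ℓ : Fin ν, ∑ j : Fin ν,
        Complex.exp (((ℓ : ℕ) : ℂ) * Φ (h j.succ - 1)) * A j = F ℓ) →
      A = fun j => ∑ k ∈ Finset.Ico (h j.castSucc) (h j.succ),
        α k * Complex.exp (∑ i, φ k i * ((s : ℂ) * δ i)) := by
  have part1 : ∀ ℓ : Fin ν, ∑ j : Fin ν,
      Complex.exp (((ℓ : ℕ) : ℂ) * Φ (h j.succ - 1)) *
        (∑ k ∈ Finset.Ico (h j.castSucc) (h j.succ),
          α k * Complex.exp (∑ i, φ k i * ((s : ℂ) * δ i))) = F ℓ := by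
    intro ℓ
    set G : ℕ → ℂ := fun k => α k *
      Complex.exp (∑ i, φ k i * (((ℓ : ℕ) : ℂ) * Δ i + (s : ℂ) * δ i)) with hG
    have hsplit : ∀ k, G k = Complex.exp (((ℓ : ℕ) : ℂ) * Φ k) *
        (α k * Complex.exp (∑ i, φ k i * ((s : ℂ) * δ i))) := by
      intro k
      have : (∑ i, φ k i * (((ℓ : ℕ) : ℂ) * Δ i + (s : ℂ) * δ i))
          = ((ℓ : ℕ) : ℂ) * Φ k + ∑ i, φ k i * ((s : ℂ) * δ i) := by
        rw [hΦ, Finset.mul_sum, ← Finset.sum_add_distrib]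
        refine Finset.sum_congr rfl fun i _ => ?_
        ring
      rw [hG]
      simp only [this, Complex.exp_add]
      ring
    have hps := pile_sum ν h hmono.monotone G
    rw [h0, hlast] at hps
    rw [hF ℓ, ← hG]
    rw [Nat.Ico_zero_eq_range] at hps
    rw [← hps]
    refine Finset.sum_congr rfl fun j _ => ?_
    rw [Finset.mul_sum]
    refine Finset.sum_congr rfl fun k hk => ?_
    rw [Finset.mem_Ico] at hk
    rw [hsplit k, hcol j k hk.1 hk.2]
  refine ⟨part1, fun A hA => ?_⟩
  set A₀ : Fin ν → ℂ := fun j => ∑ k ∈ Finset.Ico (h j.castSucc) (h j.succ),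
    α k * Complex.exp (∑ i, φ k i * ((s : ℂ) * δ i)) with hA₀
  have hzero : (fun j => A j - A₀ j) = 0 := by
    refine Matrix.eq_zero_of_forall_pow_sum_mul_pow_eq_zero hdist fun ℓ => ?_
    have := sub_eq_zero.mpr ((hA ℓ).trans (part1 ℓ).symm)
    rw [← Finset.sum_sub_distrib] at this
    rw [← this]
    refine Finset.sum_congr rfl fun j _ => ?_
    rw [← Complex.exp_nat_mul]
    ring
  funext j
  have := congrFun hzero j
  simpa [sub_eq_zero] using this
end

section
/- (Second-level identification system.) Let d, n ≥ 1, let φ_1, …, φ_n ∈ ℂ^d and α_1, …, α_n ∈ ℂ, let f(x) = Σ_{j=1}^n α_j exp(⟨φ_j, x⟩), and let Δ, δ₁, δ₂ ∈ ℂ^d. Suppose there are indices 0 = g_0 < g_1 < … < g_μ = n such that ⟨φ_k, Δ⟩ = ⟨φ_{g_j}, Δ⟩ and ⟨φ_k, δ₁⟩ = ⟨φ_{g_j}, δ₁⟩ for all k with g_{j−1} < k ≤ g_j, and set Ω_j = ⟨φ_{g_j}, Δ⟩ + ⟨φ_{g_j}, δ₁⟩. Assume exp(Ω_1), …, exp(Ω_μ)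 are pairwise distinct. Fix an integer s ≥ 0 and define the samples F_{sℓ} = f((ℓ−1)(Δ + δ₁) + sδ₂) for ℓ = 1, …, μ. Then the μ×μ Vandermonde system whose (ℓ, j) entry is exp((ℓ−1)Ω_j) and whose right-hand side is (F_{s1}, …, F_{sμ})ᵀ has the unique solution A_{sj} = Σ_{k=g_{j−1}+1}^{g_j} α_k exp(⟨φ_k, sδ₂⟩), j = 1, …, μ. -/
lemma sum_blocks (G : ℕ → ℕ) (hG : Monotone G) (f : ℕ → ℂ) (m : ℕ) :
    ∑ j ∈ Finset.range m, ∑ k ∈ Finset.Ico (G j) (G (j+1)), f k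
      = ∑ k ∈ Finset.Ico (G 0) (G m), f k := by
  induction m with
  | zero => simp
  | succ m ih =>
      rw [Finset.sum_range_succ, ih,
        Finset.sum_Ico_consecutive _ (hG (Nat.zero_le m)) (hG (Nat.le_succ m))]

/-- Second-level identification system.  Terms are indexed `0, …, n-1`
(0-indexed version of `1, …, n`) and `g : Fin (μ+1) → ℕ` encodes the
collision indices `0 = g_0 < g_1 < … < g_μ = n`; pile `j` consists of the
terms `k` with `g_{j-1} ≤ k < g_j`, with representative `g_j - 1`.  Assume
both `⟨φ k, Δ⟩` and `⟨φ k, δ₁⟩` are constant on each pile, set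
`Ω j = ⟨φ_{g_j}, Δ⟩ + ⟨φ_{g_j}, δ₁⟩`, and assume the values `exp (Ω j)` are
pairwise distinct.  For fixed `s`, the samples
`F ℓ = f((ℓ-1)(Δ+δ₁) + sδ₂)`, `ℓ = 1, …, μ` (encoded by `ℓ : Fin μ` standing
for `ℓ-1`), satisfy the `μ×μ` Vandermonde system with `(ℓ, j)` entry
`exp ((ℓ-1) Ω j)`, whose unique solution is
`A j = ∑_{k ∈ pile j} α k * exp ⟨φ k, sδ₂⟩`. -/
theorem second_level_identification_system
    (d n μ : ℕ) (hd : 1 ≤ d) (hn : 1 ≤ n) (hμ : 1 ≤ μ)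
    (φ : ℕ → Fin d → ℂ) (α : ℕ → ℂ) (Δ δ₁ δ₂ : Fin d → ℂ)
    (g : Fin (μ + 1) → ℕ) (gmono : StrictMono g)
    (g0 : g 0 = 0) (glast : g (Fin.last μ) = n)
    (hcolΔ : ∀ j : Fin μ, ∀ k : ℕ, g j.castSucc ≤ k → k < g j.succ →
      ∑ i, φ k i * Δ i = ∑ i, φ (g j.succ - 1) i * Δ i)
    (hcolδ₁ : ∀ j : Fin μ, ∀ k : ℕ, g j.castSucc ≤ k → k < g j.succ →
      ∑ i, φ k i * δ₁ i = ∑ i, φ (g j.succ - 1) i * δ₁ i)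
    (Ω : Fin μ → ℂ)
    (hΩ : ∀ j : Fin μ, Ω j =
      (∑ i, φ (g j.succ - 1) i * Δ i) + ∑ i, φ (g j.succ - 1) i * δ₁ i)
    (hdist : Function.Injective fun j : Fin μ => Complex.exp (Ω j))
    (s : ℕ) (F : Fin μ → ℂ)
    (hF : ∀ ℓ : Fin μ, F ℓ = ∑ k ∈ Finset.range n, α k *
      Complex.exp (∑ i, φ k i *
        (((ℓ : ℕ) : ℂ) * (Δ i + δ₁ i) + (s : ℂ) * δ₂ i))) :
    (∀ ℓ : Fin μ, ∑ j : Fin μ,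
        Complex.exp (((ℓ : ℕ) : ℂ) * Ω j) *
          (∑ k ∈ Finset.Ico (g j.castSucc) (g j.succ),
            α k * Complex.exp (∑ i, φ k i * ((s : ℂ) * δ₂ i))) = F ℓ) ∧
    ∀ A : Fin μ → ℂ,
      (∀ ℓ : Fin μ, ∑ j : Fin μ,
        Complex.exp (((ℓ : ℕ) : ℂ) * Ω j) * A j = F ℓ) →
      A = fun j => ∑ k ∈ Finset.Ico (g j.castSucc) (g j.succ),
        α k * Complex.exp (∑ i, φ k i * ((s : ℂ) * δ₂ i)) := by
  set G : ℕ → ℕ := fun j => g ⟨min j μ, by omega⟩ with hGdef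
  have hGmono : Monotone G := by
    intro a b hab
    exact gmono.monotone (by simp only [Fin.mk_le_mk]; omega)
  have hGcast : ∀ j : Fin μ, G (j : ℕ) = g j.castSucc := by
    intro j
    exact congrArg g (Fin.ext (show min (j:ℕ) μ = (j:ℕ) by omega))
  have hGsucc : ∀ j : Fin μ, G ((j : ℕ) + 1) = g j.succ := by
    intro j
    exact congrArg g (Fin.ext (show min ((j:ℕ)+1) μ = (j:ℕ)+1 by omega))
  have key : ∀ ℓ : Fin μ, ∑ j : Fin μ,
      Complex.exp (((ℓ : ℕ) : ℂ) * Ω j) *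
        (∑ k ∈ Finset.Ico (g j.castSucc) (g j.succ),
          α k * Complex.exp (∑ i, φ k i * ((s : ℂ) * δ₂ i))) = F ℓ := by
    intro ℓ
    rw [hF]
    have hrange : Finset.range n = Finset.Ico (G 0) (G μ) := by
      have h1 : G 0 = 0 := by
        have e : G 0 = g 0 :=
          congrArg g (Fin.ext (show min 0 μ = 0 by omega))
        rw [e, g0]
      have h2 : G μ = n := by
        have e : G μ = g (Fin.last μ) :=
          congrArg g (Fin.ext (show min μ μ = μ by omega))
        rw [e, glast]
      rw [h1, h2, Finset.range_eq_Ico]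
    rw [hrange, ← sum_blocks G hGmono _ μ, ← Fin.sum_univ_eq_sum_range]
    apply Finset.sum_congr rfl
    intro j _
    rw [hGcast j, hGsucc j, Finset.mul_sum]
    apply Finset.sum_congr rfl
    intro k hk
    rw [Finset.mem_Ico] at hk
    have hk1 : ∑ i, φ k i * (((ℓ : ℕ) : ℂ) * (Δ i + δ₁ i) + (s : ℂ) * δ₂ i)
        = ((ℓ : ℕ) : ℂ) * Ω j + ∑ i, φ k i * ((s : ℂ) * δ₂ i) := by
      rw [hΩ j, ← hcolΔ j k hk.1 hk.2, ← hcolδ₁ j k hk.1 hk.2, mul_add,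
        Finset.mul_sum, Finset.mul_sum, ← Finset.sum_add_distrib,
        ← Finset.sum_add_distrib]
      exact Finset.sum_congr rfl fun i _ => by ring
    rw [hk1, Complex.exp_add]
    ring
  refine ⟨key, fun A hA => ?_⟩
  set A₀ : Fin μ → ℂ := fun j => ∑ k ∈ Finset.Ico (g j.castSucc) (g j.succ),
      α k * Complex.exp (∑ i, φ k i * ((s : ℂ) * δ₂ i)) with hA₀
  have h0 : (fun j => A j - A₀ j) = 0 := by
    apply Matrix.eq_zero_of_forall_pow_sum_mul_pow_eq_zero hdist
    intro ℓ
    have h := (hA ℓ).trans (key ℓ).symm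
    simp only [← Complex.exp_nat_mul]
    calc ∑ j, (A j - A₀ j) * Complex.exp (((ℓ : ℕ) : ℂ) * Ω j)
        = (∑ j, Complex.exp (((ℓ : ℕ) : ℂ) * Ω j) * A j)
          - ∑ j, Complex.exp (((ℓ : ℕ) : ℂ) * Ω j) * A₀ j := by
          rw [← Finset.sum_sub_distrib]; exact Finset.sum_congr rfl fun j _ => by ring
      _ = 0 := by rw [h, sub_self]
  funext j
  have := congrFun h0 j
  simpa [sub_eq_zero] using this
end
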